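/- For every nonnegative integer κ and real x, the Whittaker function satisfies M_{κ,κ+1/2}(x) = (2κ+1)! · (e^{x/2} − e^{−x/2}·e_{2κ}(x)) / x^κ, where e_j(x) = Σ_{n=0}^{j} x^n/n! is the j-th Taylor polynomial of e^x. -/

import Mathlib

open Real

/-- The degree-`j` Taylor polynomial of the exponential function. -/
noncomputable def taylorExp (j : ℕ) (x : ℝ) : ℝ :=
  ∑ n ∈ Finset.range (j + 1), x ^ n / n.factorial

/-- The classical `M`-Whittaker function, defined via the confluent hypergeometric
series `₁F₁(μ - κ + 1/2; 2μ + 1; x)`. -/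
noncomputable def whittakerM (κ μ x : ℝ) : ℝ :=
  Real.exp (-x / 2) * x ^ (μ + 1 / 2) *
    ∑' n : ℕ, ((ascPochhammer ℝ n).eval (μ - κ + 1 / 2) /
      (ascPochhammer ℝ n).eval (2 * μ + 1)) * x ^ n / n.factorial

theorem whittakerM_eq (κ : ℕ) (x : ℝ) (hx : 0 < x) :
    whittakerM κ (κ + 1 / 2) x =
      (2 * κ + 1).factorial *
        (Real.exp (x / 2) - Real.exp (-x / 2) * taylorExp (2 * κ) x) / x ^ κ := by
  have hxne : x ≠ 0 := hx.ne'
  have hsum := Real.summable_pow_div_factorial x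
  -- rewrite each term of the series
  have hterm : ∀ n : ℕ,
      ((ascPochhammer ℝ n).eval ((κ : ℝ) + 1 / 2 - κ + 1 / 2) /
        (ascPochhammer ℝ n).eval (2 * ((κ : ℝ) + 1 / 2) + 1)) * x ^ n / n.factorial
      = ((2 * κ + 1).factorial : ℝ) * (x ^ n / ((n + (2 * κ + 1)).factorial : ℝ)) := by
    intro n
    have h1 : ((κ : ℝ) + 1 / 2 - κ + 1 / 2) = 1 := by ring
    have h2 : (2 * ((κ : ℝ) + 1 / 2) + 1) = ((2 * κ + 1 : ℕ) : ℝ) + 1 := by push_cast; ring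
    have h3 := factorial_mul_ascPochhammer ℝ (2 * κ + 1) n
    have hA : (ascPochhammer ℝ n).eval (((2 * κ + 1 : ℕ) : ℝ) + 1) ≠ 0 := by
      have := ascPochhammer_pos n (((2 * κ + 1 : ℕ) : ℝ) + 1) (by positivity)
      exact this.ne'
    have hf1 : ((2 * κ + 1).factorial : ℝ) ≠ 0 := by positivity
    have hf2 : ((n.factorial : ℝ)) ≠ 0 := by positivity
    have hf3 : (((n + (2 * κ + 1)).factorial : ℝ)) ≠ 0 := by positivity
    rw [h1, h2, ascPochhammer_eval_one]
    have hcomm : ((2 * κ + 1) + n) = (n + (2 * κ + 1)) := by omega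
    rw [hcomm] at h3
    have hAeq : (ascPochhammer ℝ n).eval (((2 * κ + 1 : ℕ) : ℝ) + 1)
        = ((n + (2 * κ + 1)).factorial : ℝ) / ((2 * κ + 1).factorial : ℝ) := by
      rw [eq_div_iff hf1]; linarith [h3]
    rw [hAeq]
    field_simp
  rw [whittakerM, tsum_congr hterm, tsum_mul_left]
  -- the shifted exponential series
  have hshift : (∑ i ∈ Finset.range (2 * κ + 1), x ^ i / i.factorial) +
      ∑' i : ℕ, x ^ (i + (2 * κ + 1)) / ((i + (2 * κ + 1)).factorial : ℝ)
      = ∑' n : ℕ, x ^ n / n.factorial :=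
    Summable.sum_add_tsum_nat_add (2 * κ + 1) hsum
  have hexp : (∑' n : ℕ, x ^ n / (n.factorial : ℝ)) = Real.exp x := by
    rw [Real.exp_eq_exp_ℝ, NormedSpace.exp_eq_tsum_div]
  have hxk : x ^ (2 * κ + 1) * (∑' i : ℕ, x ^ i / ((i + (2 * κ + 1)).factorial : ℝ))
      = Real.exp x - taylorExp (2 * κ) x := by
    rw [← tsum_mul_left]
    have : ∀ i : ℕ, x ^ (2 * κ + 1) * (x ^ i / ((i + (2 * κ + 1)).factorial : ℝ))
        = x ^ (i + (2 * κ + 1)) / ((i + (2 * κ + 1)).factorial : ℝ) := by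
      intro i; rw [pow_add]; ring
    rw [tsum_congr this]
    have h := hshift
    rw [hexp] at h
    rw [taylorExp]
    linarith [h]
  have hrpow : x ^ ((κ : ℝ) + 1 / 2 + 1 / 2) = x ^ (κ + 1) := by
    rw [show ((κ : ℝ) + 1 / 2 + 1 / 2) = ((κ + 1 : ℕ) : ℝ) by push_cast; ring,
      Real.rpow_natCast]
  rw [hrpow]
  have hpow : (x : ℝ) ^ κ ≠ 0 := pow_ne_zero _ hxne
  have hpowmul : x ^ (κ + 1) * x ^ κ = x ^ (2 * κ + 1) := by
    rw [← pow_add, show κ + 1 + κ = 2 * κ + 1 from by omega]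
  have hee : Real.exp (-x / 2) * Real.exp x = Real.exp (x / 2) := by
    rw [← Real.exp_add]; ring_nf
  rw [eq_div_iff hpow]
  have hstep : Real.exp (-x / 2) * x ^ (κ + 1) *
      (((2 * κ + 1).factorial : ℝ) * ∑' i : ℕ, x ^ i / ((i + (2 * κ + 1)).factorial : ℝ)) * x ^ κ
      = Real.exp (-x / 2) * ((2 * κ + 1).factorial : ℝ) *
        (x ^ (2 * κ + 1) * ∑' i : ℕ, x ^ i / ((i + (2 * κ + 1)).factorial : ℝ)) := by
    rw [← hpowmul]; ring
  rw [hstep, hxk]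
  rw [← hee]; ring
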